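/- Let n, k, d, v, m be natural numbers with 1 ≤ k ≤ v and v + 1 ≤ m, and let V ⊆ Fin n with |V| = v. Let each of m items be hashed independently, each item to a d-tuple of buckets chosen i.i.d. uniformly among the k-element subsets of Fin n. Set p_hit = (C(v,k)/C(n,k))^d and p₁ = d · ((n−v) · C(v,k−1)/C(n,k)) · (C(v,k)/C(n,k))^{d−1}. Then the probability that exactly v + 1 of the m items have all d of their buckets contained in V, and no item has exactly d − 1 buckets contained in V with its remaining bucket containing exactly k − 1 elements of V, equals C(m, v+1) · p_hit^{v+1} · (1 − p₁ − p_hit)^{m−(v+1)}. -/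

import Mathlib

open MeasureTheory

/-- The discrete measurable structure on buckets (finite sets of memory cells). -/
instance (n : ℕ) : MeasurableSpace (Finset (Fin n)) := ⊤

namespace Stmt6Aux

lemma uniform_apply {α : Type*} [Fintype α] [MeasurableSpace α] [MeasurableSingletonClass α]
    (s : Finset α) (hs : s.Nonempty) (t : Set α) [DecidablePred (· ∈ t)] :
    (PMF.uniformOfFinset s hs).toMeasure t
      = ((s.filter (· ∈ t)).card : ENNReal) / (s.card : ENNReal) := by
  classical
  rw [PMF.toMeasure_apply_fintype]
  have h : ∀ x, t.indicator (⇑(PMF.uniformOfFinset s hs)) x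
      = if x ∈ s.filter (· ∈ t) then ((s.card : ENNReal))⁻¹ else 0 := by
    intro x
    by_cases hx : x ∈ t <;> by_cases hxs : x ∈ s <;>
      simp [Set.indicator, hx, hxs, PMF.uniformOfFinset_apply]
  simp_rw [h]
  rw [Finset.sum_ite_mem, Finset.univ_inter, Finset.sum_const, nsmul_eq_mul,
    div_eq_mul_inv]

variable {n k d v m : ℕ} (V : Finset (Fin n))

lemma card_hit (hV : V.card = v) :
    ((Finset.univ.powersetCard k).filter (fun s : Finset (Fin n) => s ⊆ V)).card = v.choose k := by
  have : (Finset.univ.powersetCard k).filter (fun s : Finset (Fin n) => s ⊆ V)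
      = V.powersetCard k := by
    ext s
    simp [Finset.mem_powersetCard, and_comm]
  rw [this, Finset.card_powersetCard, hV]

lemma card_near (hk : 1 ≤ k) (hV : V.card = v) :
    ((Finset.univ.powersetCard k).filter
      (fun s : Finset (Fin n) => ¬ s ⊆ V ∧ (s ∩ V).card = k - 1)).card
      = (n - v) * v.choose (k - 1) := by
  have key : ((Finset.univ.powersetCard k).filter
      (fun s : Finset (Fin n) => ¬ s ⊆ V ∧ (s ∩ V).card = k - 1)).card
      = ((V.powersetCard (k - 1)) ×ˢ (Vᶜ.powersetCard 1)).card := by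
    apply Finset.card_nbij' (fun s => (s ∩ V, s \ V)) (fun p => p.1 ∪ p.2)
    · intro s hs
      simp only [Finset.mem_coe, Finset.mem_filter, Finset.mem_powersetCard_univ] at hs
      obtain ⟨hcard, hns, hint⟩ := hs
      have hsd : (s \ V).card = 1 := by
        have h := Finset.card_inter_add_card_sdiff s V
        omega
      simp only [Finset.mem_coe, Finset.mem_product, Finset.mem_powersetCard]
      exact ⟨⟨Finset.inter_subset_right, hint⟩,
        ⟨fun a ha => by simp only [Finset.mem_compl]; exact fun hav =>
          (Finset.mem_sdiff.mp ha).2 hav, hsd⟩⟩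
    · rintro ⟨t, u⟩ hp
      simp only [Finset.mem_coe, Finset.mem_product, Finset.mem_powersetCard] at hp
      obtain ⟨⟨htV, htc⟩, huV, huc⟩ := hp
      have hdisj : Disjoint t u := by
        refine Finset.disjoint_left.mpr fun a hat hau => ?_
        exact (Finset.mem_compl.mp (huV hau)) (htV hat)
      obtain ⟨x, hx⟩ := Finset.card_eq_one.mp huc
      have hxV : x ∉ V := by
        have := huV (hx ▸ Finset.mem_singleton_self x)
        exact Finset.mem_compl.mp this
      simp only [Finset.mem_coe, Finset.mem_filter, Finset.mem_powersetCard_univ]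
      refine ⟨by rw [Finset.card_union_of_disjoint hdisj, htc, huc]; omega, ?_, ?_⟩
      · intro h
        exact hxV (h (Finset.mem_union_right t (hx ▸ Finset.mem_singleton_self x)))
      · have : (t ∪ u) ∩ V = t := by
          rw [Finset.union_inter_distrib_right, Finset.inter_eq_left.mpr htV]
          have : u ∩ V = ∅ := by
            rw [Finset.eq_empty_iff_forall_notMem]
            intro a ha
            obtain ⟨hau, haV⟩ := Finset.mem_inter.mp ha
            exact (Finset.mem_compl.mp (huV hau)) haV
          rw [this, Finset.union_empty]
        rw [this, htc]
    · intro s hs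
      ext a
      simp only [Finset.mem_union, Finset.mem_inter, Finset.mem_sdiff]
      tauto
    · rintro ⟨t, u⟩ hp
      simp only [Finset.mem_coe, Finset.mem_product, Finset.mem_powersetCard] at hp
      obtain ⟨⟨htV, htc⟩, huV, huc⟩ := hp
      have h1 : (t ∪ u) ∩ V = t := by
        ext a
        simp only [Finset.mem_inter, Finset.mem_union]
        constructor
        · rintro ⟨hau | hau, haV⟩
          · exact hau
          · exact absurd haV (Finset.mem_compl.mp (huV hau))
        · exact fun h => ⟨Or.inl h, htV h⟩
      have h2 : (t ∪ u) \ V = u := by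
        ext a
        simp only [Finset.mem_sdiff, Finset.mem_union]
        constructor
        · rintro ⟨hau | hau, haV⟩
          · exact absurd (htV hau) haV
          · exact hau
        · exact fun h => ⟨Or.inr h, Finset.mem_compl.mp (huV h)⟩
      simp [h1, h2]
  rw [key, Finset.card_product, Finset.card_powersetCard, Finset.card_powersetCard,
    Finset.card_compl, hV]
  simp [Nat.choose_one_right, Fintype.card_fin, Nat.mul_comm]

lemma measure_hit (hV : V.card = v)
    (hs : ((Finset.univ : Finset (Fin n)).powersetCard k).Nonempty) :
    (PMF.uniformOfFinset ((Finset.univ : Finset (Fin n)).powersetCard k) hs).toMeasure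
        {s : Finset (Fin n) | s ⊆ V}
      = (v.choose k : ENNReal) / (n.choose k : ENNReal) := by
  classical
  rw [uniform_apply]
  have h1 : (Finset.univ.powersetCard k).filter
      (· ∈ {s : Finset (Fin n) | s ⊆ V}) =
      (Finset.univ.powersetCard k).filter (fun s : Finset (Fin n) => s ⊆ V) := by
    apply Finset.filter_congr; intro x _; simp
  rw [h1, card_hit V hV, Finset.card_powersetCard, Finset.card_univ, Fintype.card_fin]

lemma measure_near (hk : 1 ≤ k) (hV : V.card = v)
    (hs : ((Finset.univ : Finset (Fin n)).powersetCard k).Nonempty) :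
    (PMF.uniformOfFinset ((Finset.univ : Finset (Fin n)).powersetCard k) hs).toMeasure
        {s : Finset (Fin n) | ¬ s ⊆ V ∧ (s ∩ V).card = k - 1}
      = (((n - v : ℕ) : ENNReal) * (v.choose (k - 1) : ENNReal)) / (n.choose k : ENNReal) := by
  classical
  rw [uniform_apply]
  have h1 : (Finset.univ.powersetCard k).filter
      (· ∈ {s : Finset (Fin n) | ¬ s ⊆ V ∧ (s ∩ V).card = k - 1}) =
      (Finset.univ.powersetCard k).filter
        (fun s : Finset (Fin n) => ¬ s ⊆ V ∧ (s ∩ V).card = k - 1) := by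
    apply Finset.filter_congr; intro x _; simp
  rw [h1, card_near V hk hV, Finset.card_powersetCard, Finset.card_univ, Fintype.card_fin]
  push_cast
  ring_nf

lemma measure_hitA (hV : V.card = v)
    (hs : ((Finset.univ : Finset (Fin n)).powersetCard k).Nonempty) :
    Measure.pi (fun _ : Fin d =>
        (PMF.uniformOfFinset ((Finset.univ : Finset (Fin n)).powersetCard k) hs).toMeasure)
      {ω : Fin d → Finset (Fin n) | ∀ j, ω j ⊆ V}
      = ((v.choose k : ENNReal) / (n.choose k : ENNReal)) ^ d := by
  have hset : {ω : Fin d → Finset (Fin n) | ∀ j, ω j ⊆ V}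
      = Set.univ.pi (fun _ => {s : Finset (Fin n) | s ⊆ V}) := by
    ext ω; simp [Set.mem_pi]
  rw [hset, Measure.pi_pi]
  simp [measure_hit V hV hs]

lemma measure_badB (hk : 1 ≤ k) (hV : V.card = v)
    (hs : ((Finset.univ : Finset (Fin n)).powersetCard k).Nonempty) :
    Measure.pi (fun _ : Fin d =>
        (PMF.uniformOfFinset ((Finset.univ : Finset (Fin n)).powersetCard k) hs).toMeasure)
      {ω : Fin d → Finset (Fin n) | ∃ j : Fin d,
        (∀ j' : Fin d, j' ≠ j → ω j' ⊆ V) ∧ ¬ ω j ⊆ V ∧ (ω j ∩ V).card = k - 1}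
      = (d : ENNReal) *
          ((((n - v : ℕ) : ENNReal) * (v.choose (k - 1) : ENNReal)) / (n.choose k : ENNReal)) *
          ((v.choose k : ENNReal) / (n.choose k : ENNReal)) ^ (d - 1) := by
  classical
  set P := (PMF.uniformOfFinset ((Finset.univ : Finset (Fin n)).powersetCard k) hs).toMeasure
    with hP
  set hitS : Set (Finset (Fin n)) := {s | s ⊆ V} with hhitS
  set nearS : Set (Finset (Fin n)) := {s | ¬ s ⊆ V ∧ (s ∩ V).card = k - 1} with hnearS
  have hset : {ω : Fin d → Finset (Fin n) | ∃ j : Fin d,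
        (∀ j' : Fin d, j' ≠ j → ω j' ⊆ V) ∧ ¬ ω j ⊆ V ∧ (ω j ∩ V).card = k - 1}
      = ⋃ j : Fin d, Set.univ.pi (fun j' => if j' = j then nearS else hitS) := by
    ext ω
    simp only [Set.mem_setOf_eq, Set.mem_iUnion, Set.mem_pi, Set.mem_univ, forall_true_left,
      true_implies]
    constructor
    · rintro ⟨j, h1, h2, h3⟩
      refine ⟨j, fun j' => ?_⟩
      by_cases hj : j' = j
      · subst hj; simp only [if_pos rfl, hnearS, Set.mem_setOf_eq]; exact ⟨h2, h3⟩
      · rw [if_neg hj]; exact h1 j' hj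
    · rintro ⟨j, h⟩
      have hj := h j
      rw [if_pos rfl] at hj
      exact ⟨j, fun j' hj' => by have := h j'; rwa [if_neg hj'] at this,
        hj.1, hj.2⟩
  rw [hset]
  have hdisj : Pairwise (Function.onFun Disjoint
      (fun j : Fin d => Set.univ.pi (fun j' => if j' = j then nearS else hitS))) := by
    intro j1 j2 hne
    refine Set.disjoint_left.mpr fun ω h1 h2 => ?_
    have a1 : ω j2 ∈ hitS := by simpa [Ne.symm hne] using h1 j2 (Set.mem_univ _)
    have a2 : ω j2 ∈ nearS := by simpa using h2 j2 (Set.mem_univ _)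
    exact a2.1 a1
  rw [measure_iUnion hdisj (fun j => .of_discrete)]
  have hbox : ∀ j : Fin d,
      Measure.pi (fun _ : Fin d => P) (Set.univ.pi (fun j' => if j' = j then nearS else hitS))
        = P nearS * (P hitS) ^ (d - 1) := by
    intro j
    rw [Measure.pi_pi]
    rw [← Finset.mul_prod_erase Finset.univ _ (Finset.mem_univ j), if_pos rfl]
    congr 1
    rw [Finset.prod_congr rfl (fun j' hj' => by
      rw [if_neg (Finset.ne_of_mem_erase hj')]), Finset.prod_const,
      Finset.card_erase_of_mem (Finset.mem_univ j), Finset.card_univ, Fintype.card_fin]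
  simp_rw [hbox]
  rw [tsum_fintype, Finset.sum_const, Finset.card_univ, Fintype.card_fin, nsmul_eq_mul]
  rw [measure_near V hk hV hs, measure_hit V hV hs, mul_assoc]

theorem main (hvm : v + 1 ≤ m) (hV : V.card = v)
    (hs : ((Finset.univ : Finset (Fin n)).powersetCard k).Nonempty)
    (hA : Measure.pi (fun _ : Fin d =>
        (PMF.uniformOfFinset ((Finset.univ : Finset (Fin n)).powersetCard k) hs).toMeasure)
      {ω : Fin d → Finset (Fin n) | ∀ j, ω j ⊆ V}
      = ((v.choose k : ENNReal) / (n.choose k : ENNReal)) ^ d)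
    (hB : Measure.pi (fun _ : Fin d =>
        (PMF.uniformOfFinset ((Finset.univ : Finset (Fin n)).powersetCard k) hs).toMeasure)
      {ω : Fin d → Finset (Fin n) | ∃ j : Fin d,
        (∀ j' : Fin d, j' ≠ j → ω j' ⊆ V) ∧ ¬ ω j ⊆ V ∧ (ω j ∩ V).card = k - 1}
      = (d : ENNReal) *
          ((((n - v : ℕ) : ENNReal) * (v.choose (k - 1) : ENNReal)) / (n.choose k : ENNReal)) *
          ((v.choose k : ENNReal) / (n.choose k : ENNReal)) ^ (d - 1)) :
    Measure.pi (fun _ : Fin m =>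
        Measure.pi (fun _ : Fin d =>
          (PMF.uniformOfFinset ((Finset.univ : Finset (Fin n)).powersetCard k) hs).toMeasure))
      {ω : Fin m → Fin d → Finset (Fin n) |
        (Finset.univ.filter
            (fun i : Fin m => ∀ j : Fin d, ω i j ⊆ V)).card = v + 1 ∧
          ∀ i : Fin m, ¬ ∃ j : Fin d,
            (∀ j' : Fin d, j' ≠ j → ω i j' ⊆ V) ∧ ¬ ω i j ⊆ V ∧
              (ω i j ∩ V).card = k - 1} =
    (m.choose (v + 1) : ENNReal) *
        (((v.choose k : ENNReal) / (n.choose k : ENNReal)) ^ d) ^ (v + 1) *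
        (1 -
            (d : ENNReal) *
              ((((n - v : ℕ) : ENNReal)) * (v.choose (k - 1) : ENNReal) /
                (n.choose k : ENNReal)) *
              ((v.choose k : ENNReal) / (n.choose k : ENNReal)) ^ (d - 1) -
            ((v.choose k : ENNReal) / (n.choose k : ENNReal)) ^ d) ^
          (m - (v + 1)) := by
  classical
  set P := (PMF.uniformOfFinset ((Finset.univ : Finset (Fin n)).powersetCard k) hs).toMeasure
    with hP
  set ν := Measure.pi (fun _ : Fin d => P) with hν
  set hitA : Set (Fin d → Finset (Fin n)) := {ω | ∀ j, ω j ⊆ V} with hhitA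
  set badB : Set (Fin d → Finset (Fin n)) := {ω | ∃ j : Fin d,
      (∀ j' : Fin d, j' ≠ j → ω j' ⊆ V) ∧ ¬ ω j ⊆ V ∧ (ω j ∩ V).card = k - 1} with hbadB
  have hABdisj : Disjoint hitA badB := by
    refine Set.disjoint_left.mpr fun ω hωA hωB => ?_
    obtain ⟨j, -, hj2, -⟩ := hωB
    exact hj2 (hωA j)
  have hprob : IsProbabilityMeasure ν := by infer_instance
  have hC : ν (hitA ∪ badB)ᶜ =
      1 - (d : ENNReal) *
            ((((n - v : ℕ) : ENNReal)) * (v.choose (k - 1) : ENNReal) / (n.choose k : ENNReal)) *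
            ((v.choose k : ENNReal) / (n.choose k : ENNReal)) ^ (d - 1) -
          ((v.choose k : ENNReal) / (n.choose k : ENNReal)) ^ d := by
    rw [prob_compl_eq_one_sub .of_discrete, measure_union hABdisj .of_discrete, hA, hB,
      tsub_tsub, add_comm]
  -- decompose the event
  have hE : {ω : Fin m → Fin d → Finset (Fin n) |
        (Finset.univ.filter (fun i : Fin m => ∀ j : Fin d, ω i j ⊆ V)).card = v + 1 ∧
          ∀ i : Fin m, ¬ ∃ j : Fin d,
            (∀ j' : Fin d, j' ≠ j → ω i j' ⊆ V) ∧ ¬ ω i j ⊆ V ∧ (ω i j ∩ V).card = k - 1}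
      = ⋃ S ∈ Finset.univ.powersetCard (v + 1),
          Set.univ.pi (fun i : Fin m => if i ∈ S then hitA else (hitA ∪ badB)ᶜ) := by
    ext ω
    simp only [Set.mem_setOf_eq, Set.mem_iUnion, Set.mem_pi, Set.mem_univ, true_implies,
      Finset.mem_powersetCard_univ, exists_prop]
    constructor
    · rintro ⟨h1, h2⟩
      refine ⟨Finset.univ.filter (fun i => ∀ j, ω i j ⊆ V), h1, fun i => ?_⟩
      by_cases hi : i ∈ Finset.univ.filter (fun i => ∀ j, ω i j ⊆ V)
      · rw [if_pos hi]
        exact (Finset.mem_filter.mp hi).2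
      · rw [if_neg hi]
        intro hmem
        rcases hmem with hmem | hmem
        · exact hi (Finset.mem_filter.mpr ⟨Finset.mem_univ i, hmem⟩)
        · exact h2 i hmem
    · rintro ⟨S, hScard, hω⟩
      have hfil : Finset.univ.filter (fun i => ∀ j, ω i j ⊆ V) = S := by
        ext i
        simp only [Finset.mem_filter, Finset.mem_univ, true_and]
        constructor
        · intro hi
          by_contra hiS
          have := hω i
          rw [if_neg hiS] at this
          exact this (Or.inl hi)
        · intro hiS
          have := hω i
          rwa [if_pos hiS] at this
      refine ⟨by rw [hfil, hScard], fun i hmem => ?_⟩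
      by_cases hiS : i ∈ S
      · have := hω i
        rw [if_pos hiS] at this
        exact Set.disjoint_left.mp hABdisj this hmem
      · have := hω i
        rw [if_neg hiS] at this
        exact this (Or.inr hmem)
  rw [hE, measure_biUnion_finset ?_ (fun S _ => .of_discrete)]
  · have hbox : ∀ S ∈ Finset.univ.powersetCard (v + 1),
        Measure.pi (fun _ : Fin m => ν)
          (Set.univ.pi (fun i : Fin m => if i ∈ S then hitA else (hitA ∪ badB)ᶜ))
          = (((v.choose k : ENNReal) / (n.choose k : ENNReal)) ^ d) ^ (v + 1) *
            (ν (hitA ∪ badB)ᶜ) ^ (m - (v + 1)) := by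
      intro S hS
      rw [Finset.mem_powersetCard_univ] at hS
      rw [Measure.pi_pi]
      have : ∀ i : Fin m, ν (if i ∈ S then hitA else (hitA ∪ badB)ᶜ)
          = if i ∈ S then ν hitA else ν (hitA ∪ badB)ᶜ := fun i => by
        by_cases hi : i ∈ S <;> simp [hi]
      simp_rw [this]
      rw [Finset.prod_ite, Finset.prod_const, Finset.prod_const,
        Finset.filter_univ_mem, hS, hA]
      congr 2
      rw [Finset.filter_not, Finset.filter_univ_mem, Finset.card_sdiff_of_subset (Finset.subset_univ S),
        Finset.card_univ, Fintype.card_fin, hS]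
    rw [Finset.sum_congr rfl hbox, Finset.sum_const, Finset.card_powersetCard,
      Finset.card_univ, Fintype.card_fin, nsmul_eq_mul, hC, mul_assoc]
    ring
  · intro S1 hS1 S2 hS2 hne
    refine Set.disjoint_left.mpr fun ω h1 h2 => ?_
    apply hne
    ext i
    constructor
    · intro hi
      by_contra hi2
      have b1 : ω i ∈ hitA := by simpa [hi] using h1 i (Set.mem_univ i)
      have b2 : ω i ∈ (hitA ∪ badB)ᶜ := by simpa [hi2] using h2 i (Set.mem_univ i)
      exact b2 (Or.inl b1)
    · intro hi
      by_contra hi2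
      have b1 : ω i ∈ (hitA ∪ badB)ᶜ := by simpa [hi2] using h1 i (Set.mem_univ i)
      have b2 : ω i ∈ hitA := by simpa [hi] using h2 i (Set.mem_univ i)
      exact b1 (Or.inl b2)

end Stmt6Aux

/-- The probability `p_bad(v)` that a given vertex set `V` of size `v` is bad:
`m` items are hashed independently, each to a `d`-tuple of buckets chosen i.i.d.
uniformly among the `k`-element subsets of `Fin n`.  With
`p_hit = (C(v,k)/C(n,k))^d` and
`p₁ = d·((n−v)·C(v,k−1)/C(n,k))·(C(v,k)/C(n,k))^{d−1}`, the probability that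
exactly `v+1` items have all their buckets inside `V` while no item has exactly
`d−1` buckets inside `V` with the remaining bucket meeting `V` in exactly `k−1`
cells equals `C(m,v+1)·p_hit^{v+1}·(1−p₁−p_hit)^{m−(v+1)}`. -/
theorem stmt_6 (n k d v m : ℕ) (hk : 1 ≤ k) (hkv : k ≤ v) (hvm : v + 1 ≤ m)
    (V : Finset (Fin n)) (hV : V.card = v) :
    Measure.pi (fun _ : Fin m =>
        Measure.pi (fun _ : Fin d =>
          (PMF.uniformOfFinset
            ((Finset.univ : Finset (Fin n)).powersetCard k)
            (by
              rw [Finset.powersetCard_nonempty]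
              have : v ≤ n := by simpa [hV] using V.card_le_univ
              simpa using hkv.trans this)).toMeasure))
      {ω : Fin m → Fin d → Finset (Fin n) |
        (Finset.univ.filter
            (fun i : Fin m => ∀ j : Fin d, ω i j ⊆ V)).card = v + 1 ∧
          ∀ i : Fin m, ¬ ∃ j : Fin d,
            (∀ j' : Fin d, j' ≠ j → ω i j' ⊆ V) ∧ ¬ ω i j ⊆ V ∧
              (ω i j ∩ V).card = k - 1} =
    (m.choose (v + 1) : ENNReal) *
        (((v.choose k : ENNReal) / (n.choose k : ENNReal)) ^ d) ^ (v + 1) *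
        (1 -
            (d : ENNReal) *
              (((n : ENNReal) - (v : ENNReal)) * (v.choose (k - 1) : ENNReal) /
                (n.choose k : ENNReal)) *
              ((v.choose k : ENNReal) / (n.choose k : ENNReal)) ^ (d - 1) -
            ((v.choose k : ENNReal) / (n.choose k : ENNReal)) ^ d) ^
          (m - (v + 1)) := by
  have hn : v ≤ n := by simpa [hV] using V.card_le_univ
  have hcast : ((n : ENNReal) - (v : ENNReal)) = ((n - v : ℕ) : ENNReal) := by
    exact (ENNReal.natCast_sub n v).symm
  rw [hcast]
  exact Stmt6Aux.main V hvm hV _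
    (Stmt6Aux.measure_hitA V hV _) (Stmt6Aux.measure_badB V hk hV _)
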